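/- Local metric equivalence (upper part): if (Π, ω) and (Π', ω') are separable MABS parameters with min(ASB,WSB) ≥ δ and ‖ΠAω − Π'Aω'‖ ≤ δ√M/(1 + m·a_k) (Frobenius norm), then d((Π,ω),(Π',ω')) ≤ ‖ΠAω − Π'Aω'‖, where d((Π,ω),(Π',ω')) = √M·1_{Π≠Π'} + max_i ‖ω_{i·} − ω'_{i·}‖. -/

import Mathlib

open Finset Real

namespace MABS

/-- Euclidean norm of a vector in `ℝ^M`. -/
noncomputable def vnorm {M : ℕ} (v : Fin M → ℝ) : ℝ := Real.sqrt (∑ j, (v j) ^ 2)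

/-- Euclidean norm of the `i`-th row of the mixing matrix `ω`. -/
noncomputable def rowNorm {m M : ℕ} (ω : Fin m → Fin M → ℝ) (i : Fin m) : ℝ := vnorm (ω i)

/-- `e` has all its entries in the alphabet `𝔄`. -/
def inAlph (𝔄 : Finset ℝ) {m : ℕ} (e : Fin m → ℝ) : Prop := ∀ i, e i ∈ 𝔄

/-- The mixture `e ω ∈ ℝ^M` of the rows of `ω` with coefficients `e`. -/
noncomputable def mix {m M : ℕ} (e : Fin m → ℝ) (ω : Fin m → Fin M → ℝ) : Fin M → ℝ :=
  fun j => ∑ i, e i * ω i j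

/-- Alphabet separation boundary `ASB(ω) = min_{e ≠ e' ∈ 𝔄^m} ‖eω - e'ω‖ / √M`. -/
noncomputable def ASB (𝔄 : Finset ℝ) {m M : ℕ} (ω : Fin m → Fin M → ℝ) : ℝ :=
  sInf {x : ℝ | ∃ e e' : Fin m → ℝ, inAlph 𝔄 e ∧ inAlph 𝔄 e' ∧ e ≠ e' ∧
    x = vnorm (mix e ω - mix e' ω) / Real.sqrt (M : ℝ)}

/-- `WSB(ω) ≥ δ`, i.e. every consecutive row-norm gap is at least `2δ√M/(1+m·a_k)`. -/
def WSBge (ak δ : ℝ) {m M : ℕ} (ω : Fin m → Fin M → ℝ) : Prop :=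
  ∀ i j : Fin m, (j : ℕ) = (i : ℕ) + 1 →
    δ ≤ ((1 + (m : ℝ) * ak) / (2 * Real.sqrt (M : ℝ))) * (rowNorm ω j - rowNorm ω i)

/-- Weights separation boundary as a real number. -/
noncomputable def WSBval (ak : ℝ) {m M : ℕ} (ω : Fin m → Fin M → ℝ) : ℝ :=
  ((1 + (m : ℝ) * ak) / (2 * Real.sqrt (M : ℝ))) *
    sInf {x : ℝ | ∃ i j : Fin m, (j : ℕ) = (i : ℕ) + 1 ∧ x = rowNorm ω j - rowNorm ω i}

/-- `ω ∈ Ω_{m,M}`: nonnegative entries, columns summing to one, strictly increasing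
positive row norms. -/
def Omega {m M : ℕ} (ω : Fin m → Fin M → ℝ) : Prop :=
  (∀ i j, 0 ≤ ω i j) ∧ (∀ j, ∑ i, ω i j = 1) ∧
    (∀ i, 0 < rowNorm ω i) ∧ StrictMono (rowNorm ω)

/-- The alphabet `𝔄 = {0, 1, a₃, …, a_k}` with `1 < a₃ < … < a_k`: it contains `0` and `1`,
`ak` is its maximal element, and every nonzero element is at least `1`. -/
def AlphOK (𝔄 : Finset ℝ) (ak : ℝ) : Prop :=
  (0 : ℝ) ∈ 𝔄 ∧ (1 : ℝ) ∈ 𝔄 ∧ ak ∈ 𝔄 ∧ (∀ x ∈ 𝔄, x ≤ ak) ∧ (∀ x ∈ 𝔄, x = 0 ∨ 1 ≤ x)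

/-- `Δ𝔄_min`, the minimal distance between distinct alphabet values. -/
noncomputable def DeltaMin (𝔄 : Finset ℝ) : ℝ :=
  sInf {x : ℝ | ∃ a ∈ 𝔄, ∃ b ∈ 𝔄, a ≠ b ∧ x = |a - b|}

/-- The `i`-th standard unit (row) vector in `ℝ^m`. -/
def unitRow {m : ℕ} (i : Fin m) : Fin m → ℝ := fun i' => if i' = i then 1 else 0

/-- `F = ΠA` is a separable finite-alphabet design: every row lies in `𝔄^m` and every
standard unit vector occurs among the rows. -/
def Separable (𝔄 : Finset ℝ) {n m : ℕ} (F : Fin n → Fin m → ℝ) : Prop :=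
  (∀ j, inAlph 𝔄 (F j)) ∧ ∀ i : Fin m, ∃ j, F j = unitRow i

end MABS
namespace MABS

/-- The metric `d((F,ω),(F',ω')) = √M·1_{F ≠ F'} + max_i ‖ω_{i·} - ω'_{i·}‖`. -/
noncomputable def dmet {n m M : ℕ} (F F' : Fin n → Fin m → ℝ)
    (ω ω' : Fin m → Fin M → ℝ) : ℝ :=
  (if F = F' then 0 else Real.sqrt (M : ℝ)) +
    sSup (Set.range fun i : Fin m => vnorm (ω i - ω' i))

/-- The Frobenius distance `‖Fω - F'ω'‖` between the two `n × M` mixtures. -/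
noncomputable def frob {n m M : ℕ} (F F' : Fin n → Fin m → ℝ)
    (ω ω' : Fin m → Fin M → ℝ) : ℝ :=
  Real.sqrt (∑ j : Fin n, ∑ l : Fin M, (mix (F j) ω l - mix (F' j) ω' l) ^ 2)

end MABS

namespace MABS

section VN
variable {M : ℕ}

lemma vnorm_nonneg (v : Fin M → ℝ) : 0 ≤ vnorm v := Real.sqrt_nonneg _

lemma vnorm_sq (v : Fin M → ℝ) : vnorm v ^ 2 = ∑ j, (v j) ^ 2 :=
  Real.sq_sqrt (by positivity)

lemma vnorm_mono {v w : Fin M → ℝ} (h : ∀ l, |v l| ≤ |w l|) : vnorm v ≤ vnorm w := by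
  apply Real.sqrt_le_sqrt
  apply Finset.sum_le_sum
  intro l _
  calc (v l)^2 = |v l|^2 := (sq_abs _).symm
  _ ≤ |w l|^2 := by apply pow_le_pow_left₀ (abs_nonneg _) (h l)
  _ = (w l)^2 := sq_abs _

lemma vnorm_add_le (u v : Fin M → ℝ) : vnorm (u + v) ≤ vnorm u + vnorm v := by
  have hcs : ∑ l, u l * v l ≤ vnorm u * vnorm v := by
    simpa [vnorm] using Real.sum_mul_le_sqrt_mul_sqrt (Finset.univ) u v
  have hexp : ∑ l, (u l + v l)^2 = ((∑ l, (u l)^2) + 2*(∑ l, u l * v l)) + ∑ l, (v l)^2 := by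
    rw [Finset.mul_sum, ← Finset.sum_add_distrib, ← Finset.sum_add_distrib]
    congr 1; funext l; ring
  have h2 : ∑ l, (u l + v l)^2 ≤ (vnorm u + vnorm v)^2 := by
    have hu := vnorm_sq u
    have hv := vnorm_sq v
    nlinarith [vnorm_nonneg u, vnorm_nonneg v]
  have heq : vnorm (u + v) = Real.sqrt (∑ l, (u l + v l)^2) := by simp [vnorm]
  rw [heq]
  have hnn : (0:ℝ) ≤ vnorm u + vnorm v := by
    have := vnorm_nonneg u; have := vnorm_nonneg v; linarith
  calc Real.sqrt (∑ l, (u l + v l)^2) ≤ Real.sqrt ((vnorm u + vnorm v)^2) := Real.sqrt_le_sqrt h2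
  _ = vnorm u + vnorm v := Real.sqrt_sq hnn

lemma vnorm_sub_rev (u v : Fin M → ℝ) : vnorm (u - v) = vnorm (v - u) := by
  unfold vnorm; congr 1; apply Finset.sum_congr rfl; intro l _
  simp only [Pi.sub_apply]; ring

lemma vnorm_triangle (x y z : Fin M → ℝ) :
    vnorm (x - z) ≤ vnorm (x - y) + vnorm (y - z) := by
  have h : x - z = (x - y) + (y - z) := by abel
  rw [h]; exact vnorm_add_le _ _

lemma vnorm_le_vnorm_add (x y : Fin M → ℝ) : vnorm x ≤ vnorm y + vnorm (x - y) := by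
  have h : x = y + (x - y) := by abel
  calc vnorm x = vnorm (y + (x - y)) := by rw [← h]
  _ ≤ vnorm y + vnorm (x - y) := vnorm_add_le _ _

lemma vnorm_smul (c : ℝ) (v : Fin M → ℝ) :
    vnorm (fun l => c * v l) = |c| * vnorm v := by
  unfold vnorm
  rw [← Real.sqrt_sq_eq_abs, ← Real.sqrt_mul (sq_nonneg c), Finset.mul_sum]
  congr 1; apply Finset.sum_congr rfl; intro l _; ring

lemma vnorm_zero : vnorm (fun _ : Fin M => (0:ℝ)) = 0 := by
  unfold vnorm; simp

lemma vnorm_sum_le {ι : Type*} [DecidableEq ι] (S : Finset ι) (c : ι → ℝ)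
    (v : ι → Fin M → ℝ) (hc : ∀ u ∈ S, 0 ≤ c u) :
    vnorm (fun l => ∑ u ∈ S, c u * v u l) ≤ ∑ u ∈ S, c u * vnorm (v u) := by
  classical
  induction S using Finset.induction with
  | empty => simp [vnorm]
  | @insert a S ha ih =>
    have hca : 0 ≤ c a := hc a (Finset.mem_insert_self _ _)
    have hc' : ∀ u ∈ S, 0 ≤ c u := fun u hu => hc u (Finset.mem_insert_of_mem hu)
    have h1 : (fun l => ∑ u ∈ insert a S, c u * v u l)
        = (fun l => c a * v a l) + (fun l => ∑ u ∈ S, c u * v u l) := by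
      funext l; simp [Finset.sum_insert ha]
    rw [h1, Finset.sum_insert ha]
    calc vnorm ((fun l => c a * v a l) + (fun l => ∑ u ∈ S, c u * v u l))
        ≤ vnorm (fun l => c a * v a l) + vnorm (fun l => ∑ u ∈ S, c u * v u l) :=
          vnorm_add_le _ _
    _ ≤ c a * vnorm (v a) + ∑ u ∈ S, c u * vnorm (v u) := by
        have := vnorm_smul (c a) (v a)
        rw [abs_of_nonneg hca] at this
        rw [this]
        exact add_le_add le_rfl (ih hc')
    _ = _ := rfl

end VN

section MIX
variable {m M : ℕ}

lemma mix_unitRow (i : Fin m) (ω : Fin m → Fin M → ℝ) : mix (unitRow i) ω = ω i := by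
  funext l
  unfold mix unitRow
  rw [Finset.sum_eq_single i]
  · simp
  · intro b _ hb; simp [hb]
  · intro h; exact absurd (Finset.mem_univ i) h

lemma mix_zero (ω : Fin m → Fin M → ℝ) : mix (fun _ => (0:ℝ)) ω = fun _ => 0 := by
  funext l; unfold mix; simp

lemma unitRow_inj {i j : Fin m} (h : unitRow i = unitRow j) : i = j := by
  by_contra hne
  have := congrFun h i
  simp [unitRow, hne] at this

lemma unitRow_inAlph {𝔄 : Finset ℝ} {ak : ℝ} (hA : AlphOK 𝔄 ak) (i : Fin m) :
    inAlph 𝔄 (unitRow i) := by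
  intro u; unfold unitRow
  by_cases h : u = i <;> simp [h, hA.1, hA.2.1]

lemma zero_inAlph {𝔄 : Finset ℝ} {ak : ℝ} (hA : AlphOK 𝔄 ak) :
    inAlph 𝔄 (fun _ : Fin m => (0:ℝ)) := fun _ => hA.1

lemma unitRow_ne_zero (i : Fin m) : unitRow i ≠ (fun _ => (0:ℝ)) := by
  intro h
  have := congrFun h i
  simp [unitRow] at this

/-- alphabet entries are nonnegative -/
lemma alph_nonneg {𝔄 : Finset ℝ} {ak : ℝ} (hA : AlphOK 𝔄 ak) {x : ℝ} (hx : x ∈ 𝔄) : 0 ≤ x := by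
  rcases hA.2.2.2.2 x hx with h | h
  · simp [h]
  · linarith

/-- ASB separation: distinct alphabet mixtures are `δ√M`-separated. -/
lemma sep_of_ASB {𝔄 : Finset ℝ} {δ : ℝ} {ω : Fin m → Fin M → ℝ} (hM : 0 < M)
    (hasb : δ ≤ ASB 𝔄 ω) {e e' : Fin m → ℝ} (he : inAlph 𝔄 e) (he' : inAlph 𝔄 e')
    (hne : e ≠ e') : δ * Real.sqrt M ≤ vnorm (mix e ω - mix e' ω) := by
  have hsM : 0 < Real.sqrt M := Real.sqrt_pos.mpr (by exact_mod_cast hM)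
  set S := {x : ℝ | ∃ e e' : Fin m → ℝ, inAlph 𝔄 e ∧ inAlph 𝔄 e' ∧ e ≠ e' ∧
    x = vnorm (mix e ω - mix e' ω) / Real.sqrt (M : ℝ)} with hS
  have hmem : vnorm (mix e ω - mix e' ω) / Real.sqrt (M:ℝ) ∈ S := ⟨e, e', he, he', hne, rfl⟩
  have hbdd : BddBelow S := by
    refine ⟨0, ?_⟩
    rintro x ⟨a, b, _, _, _, rfl⟩
    exact div_nonneg (vnorm_nonneg _) (Real.sqrt_nonneg _)
  have h1 : δ ≤ vnorm (mix e ω - mix e' ω) / Real.sqrt (M:ℝ) :=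
    le_trans hasb (csInf_le hbdd hmem)
  calc δ * Real.sqrt M ≤ (vnorm (mix e ω - mix e' ω) / Real.sqrt (M:ℝ)) * Real.sqrt M := by
        apply mul_le_mul_of_nonneg_right h1 hsM.le
  _ = vnorm (mix e ω - mix e' ω) := by field_simp

/-- componentwise domination: if `c u ≥ 1`-ish (`c u ≠ 0`, alphabet) then `ω u ≤ mix c ω`. -/
lemma dom_mix {𝔄 : Finset ℝ} {ak : ℝ} (hA : AlphOK 𝔄 ak) {c : Fin m → ℝ}
    (hc : inAlph 𝔄 c) {ω : Fin m → Fin M → ℝ} (hnn : ∀ i l, 0 ≤ ω i l)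
    {u : Fin m} (hu : c u ≠ 0) (l : Fin M) : ω u l ≤ mix c ω l := by
  have h1 : 1 ≤ c u := by
    rcases hA.2.2.2.2 _ (hc u) with h | h
    · exact absurd h hu
    · exact h
  unfold mix
  calc ω u l = 1 * ω u l := (one_mul _).symm
  _ ≤ c u * ω u l := by apply mul_le_mul_of_nonneg_right h1 (hnn u l)
  _ ≤ ∑ i, c i * ω i l := by
      apply Finset.single_le_sum (f := fun i => c i * ω i l) ?_ (Finset.mem_univ u)
      intro i _
      exact mul_nonneg (alph_nonneg hA (hc i)) (hnn i l)

end MIX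

end MABS

namespace MABS

/-- A symmetric context for the recovery argument. -/
structure Pack (𝔄 : Finset ℝ) (ak δ fr : ℝ) (m M : ℕ) where
  ω : Fin m → Fin M → ℝ
  ω' : Fin m → Fin M → ℝ
  e : Fin m → Fin m → ℝ
  f : Fin m → Fin m → ℝ
  η : Fin m → ℝ
  η' : Fin m → ℝ
  hM : 0 < M
  hm2 : 2 ≤ m
  hak : 1 ≤ ak
  hδ : 0 < δ
  hA : AlphOK 𝔄 ak
  hfr : fr ≤ δ * Real.sqrt M / (1 + m * ak)
  hnn : ∀ i l, 0 ≤ ω i l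
  hnn' : ∀ i l, 0 ≤ ω' i l
  hmono : StrictMono (rowNorm ω)
  hmono' : StrictMono (rowNorm ω')
  hgap : ∀ i j : Fin m, i < j →
    rowNorm ω i + 2 * (δ * Real.sqrt M / (1 + m * ak)) ≤ rowNorm ω j
  hgap' : ∀ i j : Fin m, i < j →
    rowNorm ω' i + 2 * (δ * Real.sqrt M / (1 + m * ak)) ≤ rowNorm ω' j
  hsep : ∀ a b : Fin m → ℝ, inAlph 𝔄 a → inAlph 𝔄 b → a ≠ b →
    δ * Real.sqrt M ≤ vnorm (mix a ω - mix b ω)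
  hsep' : ∀ a b : Fin m → ℝ, inAlph 𝔄 a → inAlph 𝔄 b → a ≠ b →
    δ * Real.sqrt M ≤ vnorm (mix a ω' - mix b ω')
  halphe : ∀ i, inAlph 𝔄 (e i)
  halphf : ∀ s, inAlph 𝔄 (f s)
  hre : ∀ i, vnorm (ω i - mix (e i) ω') ≤ η i
  hrf : ∀ s, vnorm (ω' s - mix (f s) ω) ≤ η' s
  hηnn : ∀ i, 0 ≤ η i
  hη'nn : ∀ i, 0 ≤ η' i
  hηfr : ∀ i, η i ≤ fr
  hη'fr : ∀ i, η' i ≤ fr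
  hpair : ∀ i t, (e i = unitRow t ∧ f t = unitRow i) ∨ η i + η' t ≤ Real.sqrt 2 * fr
  hcse : ∀ w : Fin m → ℝ, (∀ u, 0 ≤ w u) →
    ∑ u, w u * η u ≤ Real.sqrt (∑ u, (w u) ^ 2) * fr
  hcsf : ∀ w : Fin m → ℝ, (∀ u, 0 ≤ w u) →
    ∑ u, w u * η' u ≤ Real.sqrt (∑ u, (w u) ^ 2) * fr

namespace Pack

variable {𝔄 : Finset ℝ} {ak δ fr : ℝ} {m M : ℕ}

/-- the swapped pack -/
def swap (P : Pack 𝔄 ak δ fr m M) : Pack 𝔄 ak δ fr m M where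
  ω := P.ω'
  ω' := P.ω
  e := P.f
  f := P.e
  η := P.η'
  η' := P.η
  hM := P.hM
  hm2 := P.hm2
  hak := P.hak
  hδ := P.hδ
  hA := P.hA
  hfr := P.hfr
  hnn := P.hnn'
  hnn' := P.hnn
  hmono := P.hmono'
  hmono' := P.hmono
  hgap := P.hgap'
  hgap' := P.hgap
  hsep := P.hsep'
  hsep' := P.hsep
  halphe := P.halphf
  halphf := P.halphe
  hre := P.hrf
  hrf := P.hre
  hηnn := P.hη'nn
  hη'nn := P.hηnn
  hηfr := P.hη'fr
  hη'fr := P.hηfr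
  hpair := fun i t => (P.hpair t i).imp (fun ⟨h1, h2⟩ => ⟨h2, h1⟩) (fun h => by linarith)
  hcse := P.hcsf
  hcsf := P.hcse

noncomputable def ep (_P : Pack 𝔄 ak δ fr m M) : ℝ := δ * Real.sqrt M / (1 + m * ak)

lemma swap_ep (P : Pack 𝔄 ak δ fr m M) : P.swap.ep = P.ep := rfl

lemma hK (P : Pack 𝔄 ak δ fr m M) : (2:ℝ) ≤ m * ak := by
  have h1 : (2:ℝ) ≤ (m:ℝ) := by exact_mod_cast P.hm2
  calc (2:ℝ) ≤ (m:ℝ) := h1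
  _ = m * 1 := (mul_one _).symm
  _ ≤ m * ak := by apply mul_le_mul_of_nonneg_left P.hak (by positivity)

lemma hsM (P : Pack 𝔄 ak δ fr m M) : 0 < Real.sqrt M :=
  Real.sqrt_pos.mpr (by exact_mod_cast P.hM)

lemma hδM_pos (P : Pack 𝔄 ak δ fr m M) : 0 < δ * Real.sqrt M :=
  mul_pos P.hδ P.hsM

lemma ep_pos (P : Pack 𝔄 ak δ fr m M) : 0 < P.ep := by
  unfold ep
  have := P.hδM_pos
  have h2 := P.hK
  positivity

lemma fr_nonneg (P : Pack 𝔄 ak δ fr m M) : 0 ≤ fr := by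
  have hm0 : 0 < m := lt_of_lt_of_le (by norm_num) P.hm2
  exact le_trans (P.hηnn ⟨0, hm0⟩) (P.hηfr ⟨0, hm0⟩)

lemma fr_le_ep (P : Pack 𝔄 ak δ fr m M) : fr ≤ P.ep := P.hfr

/-- `δ√M = (1+m·ak)·ep ≥ 3·ep` -/
lemma three_ep_le (P : Pack 𝔄 ak δ fr m M) : 3 * P.ep ≤ δ * Real.sqrt M := by
  have h2 := P.hK
  have hep := P.ep_pos
  have h : (1 + (m:ℝ) * ak) * P.ep = δ * Real.sqrt M := by
    unfold ep; field_simp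
  nlinarith

lemma sqrt2_fr_lt_2ep (P : Pack 𝔄 ak δ fr m M) : Real.sqrt 2 * fr < 2 * P.ep := by
  have h1 : Real.sqrt 2 * fr ≤ Real.sqrt 2 * P.ep :=
    mul_le_mul_of_nonneg_left P.fr_le_ep (Real.sqrt_nonneg _)
  have h2 : Real.sqrt 2 < 2 := by
    nlinarith [Real.sq_sqrt (by norm_num : (2:ℝ) ≥ 0), Real.sqrt_nonneg 2]
  have := P.ep_pos
  nlinarith

/-- row norms are at least `δ√M` -/
lemma row_ge (P : Pack 𝔄 ak δ fr m M) (i : Fin m) :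
    δ * Real.sqrt M ≤ rowNorm P.ω i := by
  have h := P.hsep (unitRow i) (fun _ => 0) (unitRow_inAlph P.hA i) (zero_inAlph P.hA)
    (unitRow_ne_zero i)
  rw [mix_unitRow, mix_zero] at h
  have heq : P.ω i - (fun _ => (0:ℝ)) = P.ω i := by funext l; simp
  rw [heq] at h
  exact h

lemma row_ge' (P : Pack 𝔄 ak δ fr m M) (i : Fin m) :
    δ * Real.sqrt M ≤ rowNorm P.ω' i := P.swap.row_ge i

end Pack
end MABS

namespace MABS
namespace Pack

variable {𝔄 : Finset ℝ} {ak δ fr : ℝ} {m M : ℕ}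

/-- The matching lemma: below a level `β` where all representations are unit rows,
the matching is the identity. -/
lemma Jmatch (P : Pack 𝔄 ak δ fr m M) (β : ℝ)
    (hge : ∀ i, rowNorm P.ω i < β → ∃ u, P.e i = unitRow u)
    (hgf : ∀ t, rowNorm P.ω' t < β → ∃ u, P.f t = unitRow u)
    (hβ : ∀ t, rowNorm P.ω' t < β → rowNorm P.ω' t + P.ep < β) :
    ∀ t, rowNorm P.ω' t < β →
      P.f t = unitRow t ∧ P.e t = unitRow t ∧
      vnorm (P.ω t - P.ω' t) ≤ P.η t ∧ vnorm (P.ω t - P.ω' t) ≤ P.η' t := by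
  have hgapa : ∀ i j : Fin m, i < j → vnorm (P.ω i) + 2 * P.ep ≤ vnorm (P.ω j) := P.hgap
  have hgapb : ∀ i j : Fin m, i < j → vnorm (P.ω' i) + 2 * P.ep ≤ vnorm (P.ω' j) := P.hgap'
  have hmbv : ∀ {i j : Fin m}, vnorm (P.ω' i) < vnorm (P.ω' j) → i < j :=
    fun {i j} h => P.hmono'.lt_iff_lt.mp h
  have hmb' : ∀ {i j : Fin m}, i < j → vnorm (P.ω' i) < vnorm (P.ω' j) :=
    fun {i j} h => P.hmono' h
  have hsq2 := P.sqrt2_fr_lt_2ep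
  have hepp := P.ep_pos
  suffices H : ∀ N : ℕ, ∀ t : Fin m, (t : ℕ) < N → rowNorm P.ω' t < β →
      P.f t = unitRow t ∧ P.e t = unitRow t ∧
      vnorm (P.ω t - P.ω' t) ≤ P.η t ∧ vnorm (P.ω t - P.ω' t) ≤ P.η' t by
    intro t ht
    exact H m t t.isLt ht
  intro N
  induction N with
  | zero => intro t ht; exact absurd ht (Nat.not_lt_zero _)
  | succ N ih =>
    intro t htN htβ
    have htβv : vnorm (P.ω' t) < β := htβ
    have IH : ∀ v : Fin m, v < t →
        P.f v = unitRow v ∧ P.e v = unitRow v ∧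
        vnorm (P.ω v - P.ω' v) ≤ P.η v ∧ vnorm (P.ω v - P.ω' v) ≤ P.η' v := by
      intro v hv
      have hvβ : rowNorm P.ω' v < β := lt_trans (hmb' hv) htβ
      exact ih v (by omega) hvβ
    obtain ⟨j, hfj⟩ := hgf t htβ
    have hdist : vnorm (P.ω' t - P.ω j) ≤ P.η' t := by
      have h := P.hrf t; rw [hfj, mix_unitRow] at h; exact h
    have hdist' : vnorm (P.ω j - P.ω' t) ≤ P.η' t := by rw [vnorm_sub_rev]; exact hdist
    -- j < t is impossible
    have hjt : ¬ j < t := by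
      intro hlt
      obtain ⟨hfv, hev, hD1, hD2⟩ := IH j hlt
      have h1 : vnorm (P.ω' t - P.ω' j) ≤ P.η' t + P.η j := by
        calc vnorm (P.ω' t - P.ω' j)
            ≤ vnorm (P.ω' t - P.ω j) + vnorm (P.ω j - P.ω' j) := vnorm_triangle _ _ _
        _ ≤ P.η' t + P.η j := add_le_add hdist hD1
      rcases P.hpair j t with ⟨he2, _⟩ | hp
      · exact absurd (unitRow_inj (hev.symm.trans he2)) (ne_of_lt hlt)
      · have h2 := hgapb j t hlt
        have h3 : vnorm (P.ω' t) ≤ vnorm (P.ω' j) + vnorm (P.ω' t - P.ω' j) :=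
          vnorm_le_vnorm_add _ _
        linarith
    -- t < j is impossible
    have htj : ¬ t < j := by
      intro hlt
      have haj : vnorm (P.ω j) ≤ vnorm (P.ω' t) + P.η' t := by
        have h3 : vnorm (P.ω j) ≤ vnorm (P.ω' t) + vnorm (P.ω j - P.ω' t) :=
          vnorm_le_vnorm_add _ _
        linarith [hdist']
      have hat : vnorm (P.ω t) + 2 * P.ep ≤ vnorm (P.ω j) := hgapa t j hlt
      have hatβ : rowNorm P.ω t < β := by
        have h4 : vnorm (P.ω' t) + P.ep < β := hβ t htβ
        have h5 := P.hη'fr t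
        have h6 := P.fr_le_ep
        show vnorm (P.ω t) < β
        linarith
      obtain ⟨v, hev⟩ := hge t hatβ
      have hdist_e : vnorm (P.ω t - P.ω' v) ≤ P.η t := by
        have h := P.hre t; rw [hev, mix_unitRow] at h; exact h
      have hηη' : P.η t + P.η' t < 2 * P.ep := by
        rcases P.hpair t t with ⟨_, hf2⟩ | hp
        · exact absurd (unitRow_inj (hf2.symm.trans hfj)) (ne_of_lt hlt)
        · linarith
      have hbv' : vnorm (P.ω' v) < vnorm (P.ω' t) := by
        have h7 : vnorm (P.ω' v) ≤ vnorm (P.ω t) + P.η t := by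
          have h8 : vnorm (P.ω' v) ≤ vnorm (P.ω t) + vnorm (P.ω' v - P.ω t) :=
            vnorm_le_vnorm_add _ _
          have h9 : vnorm (P.ω' v - P.ω t) ≤ P.η t := by rw [vnorm_sub_rev]; exact hdist_e
          linarith
        linarith
      have hvt : v < t := hmbv hbv'
      obtain ⟨hfv, hev2, hD1, hD2⟩ := IH v hvt
      have h5 : vnorm (P.ω t - P.ω v) ≤ P.η t + P.η' v := by
        calc vnorm (P.ω t - P.ω v)
            ≤ vnorm (P.ω t - P.ω' v) + vnorm (P.ω' v - P.ω v) := vnorm_triangle _ _ _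
        _ ≤ P.η t + P.η' v := by
            have h10 : vnorm (P.ω' v - P.ω v) ≤ P.η' v := by rw [vnorm_sub_rev]; exact hD2
            exact add_le_add hdist_e h10
      rcases P.hpair t v with ⟨_, hf2⟩ | hp
      · exact absurd (unitRow_inj (hf2.symm.trans hfv)) (ne_of_gt hvt)
      · have h11 := hgapa v t hvt
        have h12 : vnorm (P.ω t) ≤ vnorm (P.ω v) + vnorm (P.ω t - P.ω v) :=
          vnorm_le_vnorm_add _ _
        linarith
    have hjeq : j = t := le_antisymm (not_lt.mp htj) (not_lt.mp hjt)
    subst hjeq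
    -- now `P.f j = unitRow j`, establish the e-part
    have hatβ2 : rowNorm P.ω j < β := by
      have h3 : vnorm (P.ω j) ≤ vnorm (P.ω' j) + vnorm (P.ω j - P.ω' j) :=
        vnorm_le_vnorm_add _ _
      have h4 : vnorm (P.ω' j) + P.ep < β := hβ j htβ
      have h5 := P.hη'fr j
      have h6 := P.fr_le_ep
      show vnorm (P.ω j) < β
      linarith [hdist']
    obtain ⟨v, hev⟩ := hge j hatβ2
    have hdist_e : vnorm (P.ω j - P.ω' v) ≤ P.η j := by
      have h := P.hre j; rw [hev, mix_unitRow] at h; exact h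
    have hveq : v = j := by
      by_contra hne
      have hηη' : P.η j + P.η' j < 2 * P.ep := by
        rcases P.hpair j j with ⟨he2, _⟩ | hp
        · exact absurd (unitRow_inj (hev.symm.trans he2)) hne
        · linarith
      have h6 : vnorm (P.ω' v - P.ω' j) ≤ P.η j + P.η' j := by
        calc vnorm (P.ω' v - P.ω' j)
            ≤ vnorm (P.ω' v - P.ω j) + vnorm (P.ω j - P.ω' j) := vnorm_triangle _ _ _
        _ ≤ P.η j + P.η' j := by
            have h7 : vnorm (P.ω' v - P.ω j) ≤ P.η j := by rw [vnorm_sub_rev]; exact hdist_e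
            exact add_le_add h7 hdist'
      rcases lt_or_gt_of_ne hne with h | h
      · have h8 := hgapb v j h
        have h9 : vnorm (P.ω' j) ≤ vnorm (P.ω' v) + vnorm (P.ω' j - P.ω' v) :=
          vnorm_le_vnorm_add _ _
        have h10 : vnorm (P.ω' j - P.ω' v) = vnorm (P.ω' v - P.ω' j) := vnorm_sub_rev _ _
        linarith
      · have h8 := hgapb j v h
        have h9 : vnorm (P.ω' v) ≤ vnorm (P.ω' j) + vnorm (P.ω' v - P.ω' j) :=
          vnorm_le_vnorm_add _ _
        linarith
    subst hveq
    refine ⟨hfj, hev, hdist_e, ?_⟩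
    rw [vnorm_sub_rev]; exact hdist

end Pack
end MABS

namespace MABS

lemma mix_nonneg {m M : ℕ} {𝔄 : Finset ℝ} {ak : ℝ} (hA : AlphOK 𝔄 ak) {c : Fin m → ℝ}
    (hc : inAlph 𝔄 c) {ω : Fin m → Fin M → ℝ} (hnn : ∀ i l, 0 ≤ ω i l) (l : Fin M) :
    0 ≤ mix c ω l := by
  apply Finset.sum_nonneg
  intro i _
  exact mul_nonneg (alph_nonneg hA (hc i)) (hnn i l)

lemma vnorm_abs {M : ℕ} (v : Fin M → ℝ) : vnorm (fun l => |v l|) = vnorm v := by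
  unfold vnorm; congr 1; apply Finset.sum_congr rfl; intro l _; exact sq_abs _

namespace Pack

variable {𝔄 : Finset ℝ} {ak δ fr : ℝ} {m M : ℕ}

lemma hepM (P : Pack 𝔄 ak δ fr m M) : (1 + (m:ℝ) * ak) * P.ep = δ * Real.sqrt M := by
  have h2 := P.hK
  unfold ep; field_simp

/-- the Cauchy–Schwarz bound `√(1+m·ak²)·fr < δ√M` -/
lemma cs_strict (P : Pack 𝔄 ak δ fr m M) :
    Real.sqrt (1 + m * ak ^ 2) * fr < δ * Real.sqrt M := by
  have hepp := P.ep_pos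
  have hm1 : (1:ℝ) ≤ (m:ℝ) := by
    have : (2:ℝ) ≤ (m:ℝ) := by exact_mod_cast P.hm2
    linarith
  have hak := P.hak
  have h1 : Real.sqrt (1 + m * ak ^ 2) < 1 + m * ak := by
    have h2 : (1:ℝ) + m * ak ^ 2 < (1 + m * ak) ^ 2 := by nlinarith
    calc Real.sqrt (1 + m * ak ^ 2) < Real.sqrt ((1 + m * ak) ^ 2) := by
          apply Real.sqrt_lt_sqrt (by positivity) h2
    _ = 1 + m * ak := Real.sqrt_sq (by positivity)
  calc Real.sqrt (1 + m * ak ^ 2) * fr ≤ Real.sqrt (1 + m * ak ^ 2) * P.ep :=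
        mul_le_mul_of_nonneg_left P.fr_le_ep (Real.sqrt_nonneg _)
  _ < (1 + m * ak) * P.ep := by apply mul_lt_mul_of_pos_right h1 hepp
  _ = δ * Real.sqrt M := P.hepM

/-- Transfer contradiction: a bad `f s` supported strictly below a fully matched
initial segment contradicts ASB. -/
lemma transfer_contra (P : Pack 𝔄 ak δ fr m M) (s : Fin m)
    (hbads : P.f s ≠ unitRow s) (hss : P.f s s = 0)
    (hhigh : ∀ u, s < u → P.f s u = 0)
    (hJ : ∀ u, u < s → vnorm (P.ω u - P.ω' u) ≤ P.η' u) : False := by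
  classical
  set g : Fin m → ℝ := fun u => if (u : ℕ) < (s : ℕ) then P.f s u else 0 with hg
  have hgalph : inAlph 𝔄 g := by
    intro u
    by_cases h : (u : ℕ) < (s : ℕ) <;> simp only [g, h, if_true, if_false]
    · exact P.halphf s u
    · exact P.hA.1
  have hgnn : ∀ u, 0 ≤ g u := fun u => alph_nonneg P.hA (hgalph u)
  have hgne : unitRow s ≠ g := by
    intro h
    have h1 := congrFun h s
    simp [unitRow, g] at h1
  -- pointwise difference identity
  have hdiff : ∀ l, mix (P.f s) P.ω l - mix g P.ω' l = ∑ u, g u * (P.ω u l - P.ω' u l) := by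
    intro l
    unfold mix
    rw [← Finset.sum_sub_distrib]
    apply Finset.sum_congr rfl
    intro u _
    rcases lt_trichotomy u s with h | h | h
    · have hus : (u : ℕ) < (s : ℕ) := h
      simp only [g, hus, if_true]; ring
    · subst h
      have hus : ¬ (u : ℕ) < (u : ℕ) := lt_irrefl _
      simp only [g, hus, if_false, hss]; ring
    · have hus : ¬ (u : ℕ) < (s : ℕ) := by
        have : (s:ℕ) < (u:ℕ) := h
        omega
      simp only [g, hus, if_false, hhigh u h]; ring
  have hstep1 : vnorm (mix (P.f s) P.ω - mix g P.ω') ≤ ∑ u, g u * P.η' u := by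
    have h1 : (mix (P.f s) P.ω - mix g P.ω') = fun l => ∑ u, g u * (P.ω u l - P.ω' u l) := by
      funext l; exact hdiff l
    rw [h1]
    calc vnorm (fun l => ∑ u, g u * (P.ω u l - P.ω' u l))
        ≤ ∑ u, g u * vnorm (fun l => P.ω u l - P.ω' u l) := by
          apply vnorm_sum_le
          intro u _; exact hgnn u
    _ ≤ ∑ u, g u * P.η' u := by
        apply Finset.sum_le_sum
        intro u _
        rcases lt_trichotomy u s with h | h | h
        · apply mul_le_mul_of_nonneg_left _ (hgnn u)
          have h2 := hJ u h
          have h3 : (fun l => P.ω u l - P.ω' u l) = P.ω u - P.ω' u := rfl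
          rw [h3]; exact h2
        · subst h
          have hg0 : g u = 0 := if_neg (lt_irrefl _)
          rw [hg0]; simp
        · have hus : ¬ (u : ℕ) < (s : ℕ) := by
            have : (s:ℕ) < (u:ℕ) := h
            omega
          have hg0 : g u = 0 := if_neg hus
          rw [hg0]; simp
  -- total bound
  set w : Fin m → ℝ := fun u => if u = s then 1 else g u with hwdef
  have hwnn : ∀ u, 0 ≤ w u := by
    intro u; by_cases h : u = s <;> simp only [w, h, if_true, if_false]
    · norm_num
    · exact hgnn u
  have hwsum : ∑ u, w u * P.η' u = P.η' s + ∑ u, g u * P.η' u := by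
    have h1 : ∀ u, w u * P.η' u = (if u = s then P.η' s else 0) + g u * P.η' u := by
      intro u
      by_cases h : u = s
      · subst h
        have hg0 : g u = 0 := if_neg (lt_irrefl _)
        simp [w, hg0]
      · simp [w, h]
    rw [Finset.sum_congr rfl (fun u _ => h1 u), Finset.sum_add_distrib,
      Finset.sum_ite_eq' Finset.univ s (fun _ => P.η' s)]
    simp
  have htot : vnorm (P.ω' s - mix g P.ω') ≤ ∑ u, w u * P.η' u := by
    rw [hwsum]
    calc vnorm (P.ω' s - mix g P.ω')
        ≤ vnorm (P.ω' s - mix (P.f s) P.ω) + vnorm (mix (P.f s) P.ω - mix g P.ω') :=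
          vnorm_triangle _ _ _
    _ ≤ P.η' s + ∑ u, g u * P.η' u := add_le_add (P.hrf s) hstep1
  have hcs := P.hcsf w hwnn
  have hwsq : ∑ u, (w u) ^ 2 ≤ 1 + m * ak ^ 2 := by
    have h1 : ∀ u, (w u) ^ 2 ≤ ak ^ 2 + (if u = s then 1 else 0) := by
      intro u
      by_cases h : u = s
      · have hak := P.hak
        simp only [w, h, if_true]
        nlinarith
      · simp only [w, h, if_false]
        have h2 : g u ≤ ak := P.hA.2.2.2.1 _ (hgalph u)
        have h3 : 0 ≤ g u := hgnn u
        nlinarith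
    calc ∑ u, (w u) ^ 2 ≤ ∑ u : Fin m, (ak ^ 2 + (if u = s then 1 else 0)) :=
          Finset.sum_le_sum (fun u _ => h1 u)
    _ = m * ak ^ 2 + 1 := by
        rw [Finset.sum_add_distrib, Finset.sum_const,
          Finset.sum_ite_eq' Finset.univ s (fun _ => (1:ℝ))]
        simp [mul_comm]
    _ = 1 + m * ak ^ 2 := by ring
  have hlt : vnorm (P.ω' s - mix g P.ω') < δ * Real.sqrt M := by
    have h2 : Real.sqrt (∑ u, (w u) ^ 2) * fr ≤ Real.sqrt (1 + m * ak ^ 2) * fr :=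
      mul_le_mul_of_nonneg_right (Real.sqrt_le_sqrt hwsq) P.fr_nonneg
    have h3 := P.cs_strict
    linarith
  have hge : δ * Real.sqrt M ≤ vnorm (P.ω' s - mix g P.ω') := by
    have h := P.hsep' (unitRow s) g (unitRow_inAlph P.hA s) hgalph hgne
    rw [mix_unitRow] at h
    exact h
  linarith

end Pack
end MABS

namespace MABS
namespace Pack

variable {𝔄 : Finset ℝ} {ak δ fr : ℝ} {m M : ℕ}

/-- Core contradiction: there is no minimal-level bad representation on the `f` side. -/
lemma core (P : Pack 𝔄 ak δ fr m M) (s : Fin m)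
    (hbad : ∀ u, P.f s ≠ unitRow u)
    (hmina : ∀ i, (∀ u, P.e i ≠ unitRow u) → rowNorm P.ω' s ≤ rowNorm P.ω i)
    (hminb : ∀ t, (∀ u, P.f t ≠ unitRow u) → rowNorm P.ω' s ≤ rowNorm P.ω' t) : False := by
  classical
  have hgapa : ∀ i j : Fin m, i < j → vnorm (P.ω i) + 2 * P.ep ≤ vnorm (P.ω j) := P.hgap
  have hgapb : ∀ i j : Fin m, i < j → vnorm (P.ω' i) + 2 * P.ep ≤ vnorm (P.ω' j) := P.hgap'
  have hmbv : ∀ {i j : Fin m}, vnorm (P.ω' i) < vnorm (P.ω' j) → i < j :=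
    fun {i j} h => P.hmono'.lt_iff_lt.mp h
  have hmb' : ∀ {i j : Fin m}, i < j → vnorm (P.ω' i) < vnorm (P.ω' j) :=
    fun {i j} h => P.hmono' h
  have hsq2 := P.sqrt2_fr_lt_2ep
  have hepp := P.ep_pos
  have h3ep := P.three_ep_le
  have hfe := P.fr_le_ep
  -- the matching below level `b s`
  have J := P.Jmatch (rowNorm P.ω' s)
    (fun i hi => by
      by_contra hb
      push_neg at hb
      exact absurd (hmina i hb) (not_le.mpr hi))
    (fun t ht => by
      by_contra hb
      push_neg at hb
      exact absurd (hminb t hb) (not_le.mpr ht))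
    (fun t ht => by
      have hts : t < s := hmbv ht
      have := hgapb t s hts
      show vnorm (P.ω' t) + P.ep < vnorm (P.ω' s)
      linarith)
  have Jlt : ∀ t, t < s →
      P.f t = unitRow t ∧ P.e t = unitRow t ∧
      vnorm (P.ω t - P.ω' t) ≤ P.η t ∧ vnorm (P.ω t - P.ω' t) ≤ P.η' t :=
    fun t ht => J t (hmb' ht)
  -- kill: if `ω s` is close enough to `ω' s`, ASB forces `f s = unitRow s`
  have killclose : ∀ C : ℝ, vnorm (P.ω s - P.ω' s) ≤ C → P.η' s + C < δ * Real.sqrt M → False := by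
    intro C hclose hlt
    have hsep1 := P.hsep (P.f s) (unitRow s) (P.halphf s) (unitRow_inAlph P.hA s) (hbad s)
    rw [mix_unitRow] at hsep1
    have h1 : vnorm (mix (P.f s) P.ω - P.ω s) ≤ P.η' s + C := by
      calc vnorm (mix (P.f s) P.ω - P.ω s)
          ≤ vnorm (mix (P.f s) P.ω - P.ω' s) + vnorm (P.ω' s - P.ω s) := vnorm_triangle _ _ _
      _ ≤ P.η' s + C := by
          have h2 : vnorm (mix (P.f s) P.ω - P.ω' s) ≤ P.η' s := by
            rw [vnorm_sub_rev]; exact P.hrf s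
          have h3 : vnorm (P.ω' s - P.ω s) ≤ C := by rw [vnorm_sub_rev]; exact hclose
          exact add_le_add h2 h3
    linarith
  -- a unit representation `e s = unitRow v` with `v < s` is impossible
  have hvlt : ∀ v, v < s → P.e s = unitRow v → False := by
    intro v hvs hev
    obtain ⟨hfv, _, _, hD2⟩ := Jlt v hvs
    have hdist_e : vnorm (P.ω s - P.ω' v) ≤ P.η s := by
      have h := P.hre s; rw [hev, mix_unitRow] at h; exact h
    have h5 : vnorm (P.ω s - P.ω v) ≤ P.η s + P.η' v := by
      calc vnorm (P.ω s - P.ω v)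
          ≤ vnorm (P.ω s - P.ω' v) + vnorm (P.ω' v - P.ω v) := vnorm_triangle _ _ _
      _ ≤ P.η s + P.η' v := by
          have h6 : vnorm (P.ω' v - P.ω v) ≤ P.η' v := by rw [vnorm_sub_rev]; exact hD2
          exact add_le_add hdist_e h6
    rcases P.hpair s v with ⟨_, hf2⟩ | hp
    · exact absurd (unitRow_inj (hf2.symm.trans hfv)) (ne_of_gt hvs)
    · have h11 := hgapa v s hvs
      have h12 : vnorm (P.ω s) ≤ vnorm (P.ω v) + vnorm (P.ω s - P.ω v) :=
        vnorm_le_vnorm_add _ _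
      linarith
  -- `η s + η' s < 2ep`
  have hηη' : P.η s + P.η' s < 2 * P.ep := by
    rcases P.hpair s s with ⟨_, hf2⟩ | hp
    · exact absurd hf2 (hbad s)
    · linarith
  -- Step A : `b s ≤ a s`
  have hba : vnorm (P.ω' s) ≤ vnorm (P.ω s) := by
    by_contra hlt
    push_neg at hlt
    have hgood : ∃ v, P.e s = unitRow v := by
      by_contra hb
      push_neg at hb
      exact absurd (hmina s hb) (not_le.mpr hlt)
    obtain ⟨v, hev⟩ := hgood
    have hdist_e : vnorm (P.ω s - P.ω' v) ≤ P.η s := by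
      have h := P.hre s; rw [hev, mix_unitRow] at h; exact h
    rcases lt_trichotomy v s with h | h | h
    · exact hvlt v h hev
    · subst h
      apply killclose (P.η v) hdist_e
      have h1 := P.hηfr v
      have h2 := P.hη'fr v
      linarith
    · have h1 : vnorm (P.ω' v) ≤ vnorm (P.ω s) + P.η s := by
        have h2 : vnorm (P.ω' v) ≤ vnorm (P.ω s) + vnorm (P.ω' v - P.ω s) :=
          vnorm_le_vnorm_add _ _
        have h3 : vnorm (P.ω' v - P.ω s) ≤ P.η s := by rw [vnorm_sub_rev]; exact hdist_e
        linarith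
      have h4 := hgapb s v h
      have h5 := P.hηfr s
      linarith
  -- Step B : `f s` vanishes above `s`
  have hhigh : ∀ u, s < u → P.f s u = 0 := by
    intro u hu
    by_contra hne0
    have h1 : vnorm (P.ω u) ≤ vnorm (mix (P.f s) P.ω) := by
      apply vnorm_mono
      intro l
      rw [abs_of_nonneg (P.hnn u l),
        abs_of_nonneg (mix_nonneg P.hA (P.halphf s) P.hnn l)]
      exact dom_mix P.hA (P.halphf s) P.hnn hne0 l
    have h2 : vnorm (mix (P.f s) P.ω) ≤ vnorm (P.ω' s) + P.η' s := by
      have h3 : vnorm (mix (P.f s) P.ω) ≤ vnorm (P.ω' s) + vnorm (mix (P.f s) P.ω - P.ω' s) :=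
        vnorm_le_vnorm_add _ _
      have h4 : vnorm (mix (P.f s) P.ω - P.ω' s) ≤ P.η' s := by
        rw [vnorm_sub_rev]; exact P.hrf s
      linarith
    have h5 := hgapa s u hu
    have h6 := P.hη'fr s
    linarith
  -- Case split on `f s s`
  by_cases hfss : P.f s s = 0
  · exact P.transfer_contra s (hbad s) hfss hhigh (fun u hu => (Jlt u hu).2.2.2)
  · -- `f s s ≥ 1`, hence `a s ≤ b s + η' s`
    have has_le : vnorm (P.ω s) ≤ vnorm (P.ω' s) + P.η' s := by
      have h1 : vnorm (P.ω s) ≤ vnorm (mix (P.f s) P.ω) := by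
        apply vnorm_mono
        intro l
        rw [abs_of_nonneg (P.hnn s l),
          abs_of_nonneg (mix_nonneg P.hA (P.halphf s) P.hnn l)]
        exact dom_mix P.hA (P.halphf s) P.hnn hfss l
      have h2 : vnorm (mix (P.f s) P.ω) ≤ vnorm (P.ω' s) + vnorm (mix (P.f s) P.ω - P.ω' s) :=
        vnorm_le_vnorm_add _ _
      have h3 : vnorm (mix (P.f s) P.ω - P.ω' s) ≤ P.η' s := by
        rw [vnorm_sub_rev]; exact P.hrf s
      linarith
    by_cases hgoode : ∃ v, P.e s = unitRow v
    · obtain ⟨v, hev⟩ := hgoode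
      have hdist_e : vnorm (P.ω s - P.ω' v) ≤ P.η s := by
        have h := P.hre s; rw [hev, mix_unitRow] at h; exact h
      rcases lt_trichotomy v s with h | h | h
      · exact hvlt v h hev
      · subst h
        apply killclose (P.η v) hdist_e
        have h1 := P.hηfr v
        have h2 := P.hη'fr v
        linarith
      · have h1 : vnorm (P.ω' v) ≤ vnorm (P.ω s) + P.η s := by
          have h2 : vnorm (P.ω' v) ≤ vnorm (P.ω s) + vnorm (P.ω' v - P.ω s) :=
            vnorm_le_vnorm_add _ _
          have h3 : vnorm (P.ω' v - P.ω s) ≤ P.η s := by rw [vnorm_sub_rev]; exact hdist_e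
          linarith
        have h4 := hgapb s v h
        linarith
    · push_neg at hgoode
      -- `e s` is bad too; it vanishes above `s`
      have hhigh_e : ∀ u, s < u → P.e s u = 0 := by
        intro u hu
        by_contra hne0
        have h1 : vnorm (P.ω' u) ≤ vnorm (mix (P.e s) P.ω') := by
          apply vnorm_mono
          intro l
          rw [abs_of_nonneg (P.hnn' u l),
            abs_of_nonneg (mix_nonneg P.hA (P.halphe s) P.hnn' l)]
          exact dom_mix P.hA (P.halphe s) P.hnn' hne0 l
        have h2 : vnorm (mix (P.e s) P.ω') ≤ vnorm (P.ω s) + P.η s := by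
          have h3 : vnorm (mix (P.e s) P.ω') ≤ vnorm (P.ω s) + vnorm (mix (P.e s) P.ω' - P.ω s) :=
            vnorm_le_vnorm_add _ _
          have h4 : vnorm (mix (P.e s) P.ω' - P.ω s) ≤ P.η s := by
            rw [vnorm_sub_rev]; exact P.hre s
          linarith
        have h5 := hgapb s u hu
        linarith
      by_cases hess : P.e s s = 0
      · -- transfer on the swapped pack
        apply P.swap.transfer_contra s (hgoode s) hess hhigh_e
        intro u hu
        have hD : vnorm (P.ω u - P.ω' u) ≤ P.η u := (Jlt u hu).2.2.1
        show vnorm (P.ω' u - P.ω u) ≤ P.η u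
        rw [vnorm_sub_rev]; exact hD
      · -- sandwich : `‖ω s − ω' s‖ ≤ η s + η' s`, then kill
        have hsand : vnorm (P.ω s - P.ω' s) ≤ P.η s + P.η' s := by
          set d1 : Fin M → ℝ := P.ω s - mix (P.e s) P.ω' with hd1
          set d2 : Fin M → ℝ := P.ω' s - mix (P.f s) P.ω with hd2
          have hb1 : ∀ l, P.ω' s l - |d1 l| ≤ P.ω s l := by
            intro l
            have hdom : P.ω' s l ≤ mix (P.e s) P.ω' l :=
              dom_mix P.hA (P.halphe s) P.hnn' hess l
            have h1 : P.ω s l = mix (P.e s) P.ω' l + d1 l := by simp [d1]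
            have h2 : -|d1 l| ≤ d1 l := neg_abs_le _
            linarith
          have hb2 : ∀ l, P.ω s l - |d2 l| ≤ P.ω' s l := by
            intro l
            have hdom : P.ω s l ≤ mix (P.f s) P.ω l :=
              dom_mix P.hA (P.halphf s) P.hnn hfss l
            have h1 : P.ω' s l = mix (P.f s) P.ω l + d2 l := by simp [d2]
            have h2 : -|d2 l| ≤ d2 l := neg_abs_le _
            linarith
          have habs : ∀ l, |(P.ω s - P.ω' s) l| ≤ |(fun l' => |d1 l'| + |d2 l'|) l| := by
            intro l
            have h1 := hb1 l
            have h2 := hb2 l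
            have h3 : 0 ≤ |d1 l| := abs_nonneg _
            have h4 : 0 ≤ |d2 l| := abs_nonneg _
            rw [abs_of_nonneg (by positivity : (0:ℝ) ≤ |d1 l| + |d2 l|)]
            rw [Pi.sub_apply, abs_le]
            constructor <;> linarith
          calc vnorm (P.ω s - P.ω' s) ≤ vnorm (fun l => |d1 l| + |d2 l|) := vnorm_mono habs
          _ ≤ vnorm (fun l => |d1 l|) + vnorm (fun l => |d2 l|) := vnorm_add_le _ _
          _ = vnorm d1 + vnorm d2 := by rw [vnorm_abs, vnorm_abs]
          _ ≤ P.η s + P.η' s := add_le_add (P.hre s) (P.hrf s)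
        apply killclose (P.η s + P.η' s) hsand
        have h1 := P.hη'fr s
        linarith

end Pack
end MABS

namespace MABS
namespace Pack

variable {𝔄 : Finset ℝ} {ak δ fr : ℝ} {m M : ℕ}

lemma nobad (P : Pack 𝔄 ak δ fr m M) :
    ∀ i : Fin m, (∃ u, P.e i = unitRow u) ∧ (∃ u, P.f i = unitRow u) := by
  classical
  set Bad : Finset (Bool × Fin m) := Finset.univ.filter
    (fun p => if p.1 then (∀ u, P.f p.2 ≠ unitRow u) else (∀ u, P.e p.2 ≠ unitRow u)) with hBad
  have hval : ∀ p : Bool × Fin m, p ∈ Bad →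
      (if p.1 then (∀ u, P.f p.2 ≠ unitRow u) else (∀ u, P.e p.2 ≠ unitRow u)) :=
    fun p hp => (Finset.mem_filter.mp hp).2
  have hempty : Bad = ∅ := by
    by_contra hne
    obtain ⟨p0, hp0mem, hp0min⟩ := Finset.exists_min_image Bad
      (fun p : Bool × Fin m => if p.1 then rowNorm P.ω' p.2 else rowNorm P.ω p.2)
      (Finset.nonempty_of_ne_empty hne)
    have hp0 := hval p0 hp0mem
    by_cases hb : p0.1 = true
    · -- minimal bad is on the `f` side
      rw [hb] at hp0
      simp at hp0
      apply P.core p0.2 hp0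
      · intro i hi
        have hmem : (false, i) ∈ Bad := by
          rw [hBad]
          refine Finset.mem_filter.mpr ⟨Finset.mem_univ _, ?_⟩
          simpa using hi
        have h1 := hp0min _ hmem
        rw [hb] at h1
        simpa using h1
      · intro t ht
        have hmem : (true, t) ∈ Bad := by
          rw [hBad]
          refine Finset.mem_filter.mpr ⟨Finset.mem_univ _, ?_⟩
          simpa using ht
        have h1 := hp0min _ hmem
        rw [hb] at h1
        simpa using h1
    · -- minimal bad is on the `e` side : use the swapped pack
      have hb' : p0.1 = false := by simpa using hb
      rw [hb'] at hp0
      simp at hp0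
      apply P.swap.core p0.2 hp0
      · intro i hi
        have hmem : (true, i) ∈ Bad := by
          rw [hBad]
          refine Finset.mem_filter.mpr ⟨Finset.mem_univ _, ?_⟩
          simpa using (show ∀ u, P.f i ≠ unitRow u from hi)
        have h1 := hp0min _ hmem
        rw [hb'] at h1
        simp at h1
        exact h1
      · intro t ht
        have hmem : (false, t) ∈ Bad := by
          rw [hBad]
          refine Finset.mem_filter.mpr ⟨Finset.mem_univ _, ?_⟩
          simpa using (show ∀ u, P.e t ≠ unitRow u from ht)
        have h1 := hp0min _ hmem
        rw [hb'] at h1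
        simp at h1
        exact h1
  intro i
  constructor
  · have h1 : (false, i) ∉ Bad := by rw [hempty]; exact Finset.notMem_empty _
    rw [hBad] at h1
    simp only [Finset.mem_filter, Finset.mem_univ, true_and, Bool.false_eq_true, if_false] at h1
    push_neg at h1
    exact h1
  · have h1 : (true, i) ∉ Bad := by rw [hempty]; exact Finset.notMem_empty _
    rw [hBad] at h1
    simp only [Finset.mem_filter, Finset.mem_univ, true_and, if_true] at h1
    push_neg at h1
    exact h1

lemma allmatch (P : Pack 𝔄 ak δ fr m M) :
    ∀ t : Fin m, P.f t = unitRow t ∧ P.e t = unitRow t ∧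
      vnorm (P.ω t - P.ω' t) ≤ P.η t ∧ vnorm (P.ω t - P.ω' t) ≤ P.η' t := by
  have hnb := P.nobad
  have hm0 : 0 < m := lt_of_lt_of_le (by norm_num) P.hm2
  haveI : Nonempty (Fin m) := ⟨⟨0, hm0⟩⟩
  have hepp := P.ep_pos
  set β : ℝ := (Finset.univ.sup' Finset.univ_nonempty (fun t => rowNorm P.ω' t)) + 2 * P.ep
    with hβdef
  have hlt : ∀ t, rowNorm P.ω' t < β := by
    intro t
    have h1 : rowNorm P.ω' t ≤ Finset.univ.sup' Finset.univ_nonempty (fun t => rowNorm P.ω' t) :=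
      Finset.le_sup' _ (Finset.mem_univ t)
    rw [hβdef]; linarith
  have J := P.Jmatch β (fun i _ => (hnb i).1) (fun t _ => (hnb t).2)
    (fun t _ => by
      have h1 : rowNorm P.ω' t ≤ Finset.univ.sup' Finset.univ_nonempty (fun t => rowNorm P.ω' t) :=
        Finset.le_sup' _ (Finset.mem_univ t)
      rw [hβdef]; linarith)
  exact fun t => J t (hlt t)

end Pack

section ERR

variable {n m M : ℕ}

/-- row error -/
noncomputable def err (F F' : Fin n → Fin m → ℝ) (ω ω' : Fin m → Fin M → ℝ) (j : Fin n) : ℝ :=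
  vnorm (mix (F j) ω - mix (F' j) ω')

lemma frob_nonneg (F F' : Fin n → Fin m → ℝ) (ω ω' : Fin m → Fin M → ℝ) :
    0 ≤ frob F F' ω ω' := Real.sqrt_nonneg _

lemma err_nonneg (F F' : Fin n → Fin m → ℝ) (ω ω' : Fin m → Fin M → ℝ) (j : Fin n) :
    0 ≤ err F F' ω ω' j := vnorm_nonneg _

lemma sum_err_sq (F F' : Fin n → Fin m → ℝ) (ω ω' : Fin m → Fin M → ℝ) :
    ∑ j, (err F F' ω ω' j) ^ 2 = (frob F F' ω ω') ^ 2 := by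
  unfold err frob
  rw [Real.sq_sqrt (by positivity)]
  apply Finset.sum_congr rfl
  intro j _
  rw [vnorm_sq]
  apply Finset.sum_congr rfl
  intro l _
  simp [Pi.sub_apply]

lemma err_sq_le (F F' : Fin n → Fin m → ℝ) (ω ω' : Fin m → Fin M → ℝ) (S : Finset (Fin n)) :
    ∑ j ∈ S, (err F F' ω ω' j) ^ 2 ≤ (frob F F' ω ω') ^ 2 := by
  rw [← sum_err_sq F F' ω ω']
  apply Finset.sum_le_sum_of_subset_of_nonneg (Finset.subset_univ S)
  intro j _ _
  positivity

lemma err_le_frob (F F' : Fin n → Fin m → ℝ) (ω ω' : Fin m → Fin M → ℝ) (j : Fin n) :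
    err F F' ω ω' j ≤ frob F F' ω ω' := by
  have h1 : (err F F' ω ω' j) ^ 2 ≤ (frob F F' ω ω') ^ 2 := by
    have := err_sq_le F F' ω ω' {j}
    simpa using this
  have h2 := err_nonneg F F' ω ω' j
  have h3 := frob_nonneg F F' ω ω'
  nlinarith

lemma err_pair (F F' : Fin n → Fin m → ℝ) (ω ω' : Fin m → Fin M → ℝ) {r1 r2 : Fin n}
    (h : r1 ≠ r2) :
    err F F' ω ω' r1 + err F F' ω ω' r2 ≤ Real.sqrt 2 * frob F F' ω ω' := by
  have h1 : (err F F' ω ω' r1) ^ 2 + (err F F' ω ω' r2) ^ 2 ≤ (frob F F' ω ω') ^ 2 := by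
    have := err_sq_le F F' ω ω' {r1, r2}
    rwa [Finset.sum_pair h] at this
  have h2 := err_nonneg F F' ω ω' r1
  have h3 := err_nonneg F F' ω ω' r2
  have h4 := frob_nonneg F F' ω ω'
  have h5 : (err F F' ω ω' r1 + err F F' ω ω' r2) ^ 2 ≤ 2 * (frob F F' ω ω') ^ 2 := by
    nlinarith [sq_nonneg (err F F' ω ω' r1 - err F F' ω ω' r2)]
  have h6 : err F F' ω ω' r1 + err F F' ω ω' r2
      = Real.sqrt ((err F F' ω ω' r1 + err F F' ω ω' r2) ^ 2) :=
    (Real.sqrt_sq (by positivity)).symm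
  rw [h6]
  calc Real.sqrt ((err F F' ω ω' r1 + err F F' ω ω' r2) ^ 2)
      ≤ Real.sqrt (2 * (frob F F' ω ω') ^ 2) := Real.sqrt_le_sqrt h5
  _ = Real.sqrt 2 * frob F F' ω ω' := by
      rw [Real.sqrt_mul (by norm_num), Real.sqrt_sq h4]

lemma err_cs (F F' : Fin n → Fin m → ℝ) (ω ω' : Fin m → Fin M → ℝ)
    (g : Fin m → Fin n) (hg : Function.Injective g) (w : Fin m → ℝ) :
    ∑ u, w u * err F F' ω ω' (g u) ≤ Real.sqrt (∑ u, (w u) ^ 2) * frob F F' ω ω' := by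
  have h1 : ∑ u, (err F F' ω ω' (g u)) ^ 2 ≤ (frob F F' ω ω') ^ 2 := by
    have h2 : ∑ u, (err F F' ω ω' (g u)) ^ 2
        = ∑ j ∈ Finset.univ.image g, (err F F' ω ω' j) ^ 2 := by
      rw [Finset.sum_image]
      intro a _ b _ hab
      exact hg hab
    rw [h2]
    exact err_sq_le F F' ω ω' _
  calc ∑ u, w u * err F F' ω ω' (g u)
      ≤ Real.sqrt (∑ u, (w u) ^ 2) * Real.sqrt (∑ u, (err F F' ω ω' (g u)) ^ 2) :=
        Real.sum_mul_le_sqrt_mul_sqrt Finset.univ w (fun u => err F F' ω ω' (g u))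
  _ ≤ Real.sqrt (∑ u, (w u) ^ 2) * frob F F' ω ω' := by
      apply mul_le_mul_of_nonneg_left _ (Real.sqrt_nonneg _)
      calc Real.sqrt (∑ u, (err F F' ω ω' (g u)) ^ 2)
          ≤ Real.sqrt ((frob F F' ω ω') ^ 2) := Real.sqrt_le_sqrt h1
      _ = frob F F' ω ω' := Real.sqrt_sq (frob_nonneg F F' ω ω')

lemma err_cs_extra (F F' : Fin n → Fin m → ℝ) (ω ω' : Fin m → Fin M → ℝ)
    (g : Fin m → Fin n) (hg : Function.Injective g) {r : Fin n} (hr : ∀ u, g u ≠ r)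
    (w : Fin m → ℝ) :
    err F F' ω ω' r + ∑ u, w u * err F F' ω ω' (g u)
      ≤ Real.sqrt (1 + ∑ u, (w u) ^ 2) * frob F F' ω ω' := by
  set A := err F F' ω ω' r with hA
  set Q := Real.sqrt (∑ u, (err F F' ω ω' (g u)) ^ 2) with hQ
  have hQnn : 0 ≤ Q := Real.sqrt_nonneg _
  have hAnn : 0 ≤ A := err_nonneg F F' ω ω' r
  have hQsq : Q ^ 2 = ∑ u, (err F F' ω ω' (g u)) ^ 2 := Real.sq_sqrt (Finset.sum_nonneg fun u _ => sq_nonneg _)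
  have hsum : A ^ 2 + Q ^ 2 ≤ (frob F F' ω ω') ^ 2 := by
    rw [hQsq]
    have h2 : ∑ u, (err F F' ω ω' (g u)) ^ 2
        = ∑ j ∈ Finset.univ.image g, (err F F' ω ω' j) ^ 2 := by
      rw [Finset.sum_image]
      intro a _ b _ hab
      exact hg hab
    rw [h2, hA]
    have h3 : r ∉ Finset.univ.image g := by
      intro hmem
      obtain ⟨u, _, hu⟩ := Finset.mem_image.mp hmem
      exact hr u hu
    have h4 : (err F F' ω ω' r) ^ 2 + ∑ j ∈ Finset.univ.image g, (err F F' ω ω' j) ^ 2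
        = ∑ j ∈ insert r (Finset.univ.image g), (err F F' ω ω' j) ^ 2 :=
      (Finset.sum_insert (f := fun j => (err F F' ω ω' j) ^ 2) h3).symm
    rw [h4]
    exact err_sq_le F F' ω ω' _
  set b := Real.sqrt (∑ u, (w u) ^ 2) with hb
  have hbnn : 0 ≤ b := Real.sqrt_nonneg _
  have hbsq : b ^ 2 = ∑ u, (w u) ^ 2 := Real.sq_sqrt (Finset.sum_nonneg fun u _ => sq_nonneg _)
  have h1 : ∑ u, w u * err F F' ω ω' (g u) ≤ b * Q :=
    Real.sum_mul_le_sqrt_mul_sqrt Finset.univ w (fun u => err F F' ω ω' (g u))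
  have hfr := frob_nonneg F F' ω ω'
  have h2 : (A + b * Q) ^ 2 ≤ (1 + b ^ 2) * (frob F F' ω ω') ^ 2 := by
    nlinarith [sq_nonneg (b * A - Q)]
  have h3 : A + b * Q ≤ Real.sqrt (1 + b ^ 2) * frob F F' ω ω' := by
    have h4 : A + b * Q = Real.sqrt ((A + b * Q) ^ 2) :=
      (Real.sqrt_sq (add_nonneg hAnn (mul_nonneg hbnn hQnn))).symm
    rw [h4]
    calc Real.sqrt ((A + b * Q) ^ 2) ≤ Real.sqrt ((1 + b ^ 2) * (frob F F' ω ω') ^ 2) :=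
          Real.sqrt_le_sqrt h2
    _ = Real.sqrt (1 + b ^ 2) * frob F F' ω ω' := by
        rw [Real.sqrt_mul (by positivity), Real.sqrt_sq hfr]
  have h5 : Real.sqrt (1 + b ^ 2) = Real.sqrt (1 + ∑ u, (w u) ^ 2) := by rw [hbsq]
  rw [h5] at h3
  linarith

end ERR

/-- extract the gap bound from `WSBge` -/
lemma gap_of_WSB {m M : ℕ} {ω : Fin m → Fin M → ℝ} {ak δ : ℝ}
    (hw : WSBge ak δ ω) (hmono : StrictMono (rowNorm ω)) (hM : 0 < M)
    (hden : 0 < 1 + (m:ℝ) * ak) :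
    ∀ i j : Fin m, i < j →
      rowNorm ω i + 2 * (δ * Real.sqrt M / (1 + m * ak)) ≤ rowNorm ω j := by
  intro i j hij
  have hij' : (i : ℕ) + 1 ≤ (j : ℕ) := hij
  have hlt : (i : ℕ) + 1 < m := lt_of_le_of_lt hij' j.isLt
  set i1 : Fin m := ⟨(i : ℕ) + 1, hlt⟩ with hi1
  have hwi := hw i i1 rfl
  have hsM : 0 < Real.sqrt M := Real.sqrt_pos.mpr (by exact_mod_cast hM)
  have hc : 0 < (1 + (m:ℝ) * ak) / (2 * Real.sqrt M) := by positivity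
  have hkey : 2 * (δ * Real.sqrt M / (1 + m * ak)) * ((1 + (m:ℝ) * ak) / (2 * Real.sqrt M)) = δ := by
    field_simp
  have h2 : 2 * (δ * Real.sqrt M / (1 + m * ak)) ≤ rowNorm ω i1 - rowNorm ω i := by
    have h3 : 2 * (δ * Real.sqrt M / (1 + m * ak)) * ((1 + (m:ℝ) * ak) / (2 * Real.sqrt M))
        ≤ (rowNorm ω i1 - rowNorm ω i) * ((1 + (m:ℝ) * ak) / (2 * Real.sqrt M)) := by
      rw [hkey]
      calc δ ≤ ((1 + (m:ℝ) * ak) / (2 * Real.sqrt M)) * (rowNorm ω i1 - rowNorm ω i) := hwi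
      _ = (rowNorm ω i1 - rowNorm ω i) * ((1 + (m:ℝ) * ak) / (2 * Real.sqrt M)) := mul_comm _ _
    exact le_of_mul_le_mul_right h3 hc
  have h4 : rowNorm ω i1 ≤ rowNorm ω j := by
    rcases eq_or_lt_of_le (show i1 ≤ j from hij') with h | h
    · rw [h]
    · exact le_of_lt (hmono h)
  linarith

end MABS

namespace MABS

theorem stmt13' {n m M : ℕ} (hn : 0 < n) (hm : 0 < m) (hM : 0 < M)
    (𝔄 : Finset ℝ) (ak δ : ℝ) (hA : MABS.AlphOK 𝔄 ak) (hδ : 0 < δ)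
    (F F' : Fin n → Fin m → ℝ) (hF : MABS.Separable 𝔄 F) (hF' : MABS.Separable 𝔄 F')
    (ω ω' : Fin m → Fin M → ℝ) (hΩ : MABS.Omega ω) (hΩ' : MABS.Omega ω')
    (hasb : δ ≤ MABS.ASB 𝔄 ω) (hasb' : δ ≤ MABS.ASB 𝔄 ω')
    (hwsb : MABS.WSBge ak δ ω) (hwsb' : MABS.WSBge ak δ ω')
    (hsmall : MABS.frob F F' ω ω' ≤ δ * Real.sqrt (M : ℝ) / (1 + (m : ℝ) * ak)) :
    MABS.dmet F F' ω ω' ≤ MABS.frob F F' ω ω' := by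
  classical
  have hak : (1:ℝ) ≤ ak := hA.2.2.2.1 1 hA.2.1
  have hmak : (0:ℝ) ≤ (m:ℝ) * ak := mul_nonneg (Nat.cast_nonneg m) (by linarith)
  have hden : (0:ℝ) < 1 + (m:ℝ) * ak := by linarith
  have hsM : 0 < Real.sqrt M := Real.sqrt_pos.mpr (by exact_mod_cast hM)
  have hfr0 : 0 ≤ frob F F' ω ω' := frob_nonneg F F' ω ω'
  have hm1 : 1 ≤ m := hm
  rcases eq_or_lt_of_le hm1 with hm1' | hm2
  · -- m = 1
    have hmeq : m = 1 := hm1'.symm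
    subst hmeq
    have hω1 : ∀ (i : Fin 1) (l : Fin M), ω i l = 1 := by
      intro i l
      have h := hΩ.2.1 l
      rw [Fin.sum_univ_one] at h
      rw [Fin.eq_zero i]
      exact h
    have hω1' : ∀ (i : Fin 1) (l : Fin M), ω' i l = 1 := by
      intro i l
      have h := hΩ'.2.1 l
      rw [Fin.sum_univ_one] at h
      rw [Fin.eq_zero i]
      exact h
    have hωeq : ω = ω' := by
      funext i l
      rw [hω1 i l, hω1' i l]
    have hFF : F = F' := by
      funext j
      by_contra hne
      have hsepj := sep_of_ASB hM hasb (hF.1 j) (hF'.1 j) hne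
      have herr : vnorm (mix (F j) ω - mix (F' j) ω) ≤ frob F F' ω ω' := by
        have h1 : mix (F j) ω - mix (F' j) ω = mix (F j) ω - mix (F' j) ω' := by
          rw [← hωeq]
        rw [h1]
        exact err_le_frob F F' ω ω' j
      have hlt : δ * Real.sqrt M / (1 + ((1:ℕ):ℝ) * ak) < δ * Real.sqrt M := by
        apply div_lt_self (by positivity)
        push_cast
        linarith
      linarith
    unfold dmet
    rw [if_pos hFF, zero_add]
    apply csSup_le
    · exact ⟨vnorm (ω 0 - ω' 0), ⟨0, rfl⟩⟩
    · rintro x ⟨i, rfl⟩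
      show vnorm (ω i - ω' i) ≤ frob F F' ω ω'
      have h1 : ω i - ω' i = fun _ => (0:ℝ) := by
        funext l
        simp [hωeq]
      rw [h1, vnorm_zero]
      exact hfr0
  · -- m ≥ 2
    have hm2' : 2 ≤ m := hm2
    choose jF hjF using hF.2
    choose jF' hjF' using hF'.2
    have hjFinj : Function.Injective jF := by
      intro a b hab
      apply unitRow_inj
      rw [← hjF a, ← hjF b, hab]
    have hjF'inj : Function.Injective jF' := by
      intro a b hab
      apply unitRow_inj
      rw [← hjF' a, ← hjF' b, hab]
    let P : Pack 𝔄 ak δ (frob F F' ω ω') m M :=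
      { ω := ω
        ω' := ω'
        e := fun i => F' (jF i)
        f := fun s => F (jF' s)
        η := fun i => err F F' ω ω' (jF i)
        η' := fun s => err F F' ω ω' (jF' s)
        hM := hM
        hm2 := hm2'
        hak := hak
        hδ := hδ
        hA := hA
        hfr := hsmall
        hnn := hΩ.1
        hnn' := hΩ'.1
        hmono := hΩ.2.2.2
        hmono' := hΩ'.2.2.2
        hgap := gap_of_WSB hwsb hΩ.2.2.2 hM hden
        hgap' := gap_of_WSB hwsb' hΩ'.2.2.2 hM hden
        hsep := fun a b ha hb hne => sep_of_ASB hM hasb ha hb hne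
        hsep' := fun a b ha hb hne => sep_of_ASB hM hasb' ha hb hne
        halphe := fun i => hF'.1 (jF i)
        halphf := fun s => hF.1 (jF' s)
        hre := fun i => by
          show vnorm (ω i - mix (F' (jF i)) ω') ≤ err F F' ω ω' (jF i)
          apply le_of_eq
          unfold err
          rw [hjF i, mix_unitRow]
        hrf := fun s => by
          show vnorm (ω' s - mix (F (jF' s)) ω) ≤ err F F' ω ω' (jF' s)
          apply le_of_eq
          unfold err
          rw [hjF' s, mix_unitRow, vnorm_sub_rev]
        hηnn := fun i => err_nonneg F F' ω ω' (jF i)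
        hη'nn := fun s => err_nonneg F F' ω ω' (jF' s)
        hηfr := fun i => err_le_frob F F' ω ω' (jF i)
        hη'fr := fun s => err_le_frob F F' ω ω' (jF' s)
        hpair := fun i t => by
          by_cases h : jF i = jF' t
          · left
            constructor
            · show F' (jF i) = unitRow t
              rw [h]
              exact hjF' t
            · show F (jF' t) = unitRow i
              rw [← h]
              exact hjF i
          · right
            exact err_pair F F' ω ω' (fun hc => h hc)
        hcse := fun w _ => err_cs F F' ω ω' jF hjFinj w
        hcsf := fun w _ => err_cs F F' ω ω' jF' hjF'inj w }
    have hall := P.allmatch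
    have hFF : F = F' := by
      funext j
      by_cases hj : ∃ u, jF u = j
      · obtain ⟨u, hu⟩ := hj
        rw [← hu, hjF u]
        exact ((hall u).2.1).symm
      · push_neg at hj
        by_contra hne
        have hsepj := sep_of_ASB hM hasb (hF.1 j) (hF'.1 j) hne
        have hF'nn : ∀ u, 0 ≤ F' j u := fun u => alph_nonneg hA (hF'.1 j u)
        have htrans : vnorm (mix (F' j) ω' - mix (F' j) ω)
            ≤ ∑ u, (F' j u) * (err F F' ω ω' (jF u)) := by
          have hid : mix (F' j) ω' - mix (F' j) ω
              = fun l => ∑ u, (F' j u) * (ω' u l - ω u l) := by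
            funext l
            simp only [Pi.sub_apply]
            unfold mix
            rw [← Finset.sum_sub_distrib]
            apply Finset.sum_congr rfl
            intro u _
            ring
          rw [hid]
          calc vnorm (fun l => ∑ u, (F' j u) * (ω' u l - ω u l))
              ≤ ∑ u, (F' j u) * vnorm (fun l => ω' u l - ω u l) := by
                apply vnorm_sum_le
                intro u _
                exact hF'nn u
          _ ≤ ∑ u, (F' j u) * (err F F' ω ω' (jF u)) := by
              apply Finset.sum_le_sum
              intro u _
              apply mul_le_mul_of_nonneg_left _ (hF'nn u)
              have h1 : (fun l => ω' u l - ω u l) = ω' u - ω u := rfl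
              rw [h1, vnorm_sub_rev]
              exact (hall u).2.2.1
        have hbound : vnorm (mix (F j) ω - mix (F' j) ω)
            ≤ Real.sqrt (1 + ∑ u, (F' j u) ^ 2) * frob F F' ω ω' := by
          calc vnorm (mix (F j) ω - mix (F' j) ω)
              ≤ vnorm (mix (F j) ω - mix (F' j) ω') + vnorm (mix (F' j) ω' - mix (F' j) ω) :=
                vnorm_triangle _ _ _
          _ ≤ err F F' ω ω' j + ∑ u, (F' j u) * (err F F' ω ω' (jF u)) :=
              add_le_add (le_of_eq rfl) htrans
          _ ≤ Real.sqrt (1 + ∑ u, (F' j u) ^ 2) * frob F F' ω ω' :=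
              err_cs_extra F F' ω ω' jF hjFinj hj (F' j)
        have hwsq : ∑ u, (F' j u) ^ 2 ≤ (m:ℝ) * ak ^ 2 := by
          calc ∑ u, (F' j u) ^ 2 ≤ ∑ _u : Fin m, ak ^ 2 := by
                apply Finset.sum_le_sum
                intro u _
                have h1 : F' j u ≤ ak := hA.2.2.2.1 _ (hF'.1 j u)
                have h2 := hF'nn u
                nlinarith
          _ = (m:ℝ) * ak ^ 2 := by
              rw [Finset.sum_const]
              simp [mul_comm]
        have hfin : Real.sqrt (1 + ∑ u, (F' j u) ^ 2) * frob F F' ω ω'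
            ≤ Real.sqrt (1 + (m:ℝ) * ak ^ 2) * frob F F' ω ω' :=
          mul_le_mul_of_nonneg_right (Real.sqrt_le_sqrt (by linarith)) hfr0
        have hstrict := P.cs_strict
        linarith
    show dmet F F' ω ω' ≤ frob F F' ω ω'
    unfold dmet
    rw [if_pos hFF, zero_add]
    apply csSup_le
    · exact ⟨vnorm (ω ⟨0, hm⟩ - ω' ⟨0, hm⟩), ⟨⟨0, hm⟩, rfl⟩⟩
    · rintro x ⟨i, rfl⟩
      show vnorm (ω i - ω' i) ≤ frob F F' ω ω'
      calc vnorm (ω i - ω' i) ≤ err F F' ω ω' (jF i) := (hall i).2.2.1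
      _ ≤ frob F F' ω ω' := err_le_frob F F' ω ω' (jF i)

end MABS

/-- **local metric equivalence, upper part.** If `(F, ω)` and `(F', ω')`
are `δ`-separable MABS parameter pairs with Frobenius distance
`‖Fω - F'ω'‖ ≤ δ√M/(1 + m·a_k)`, then `d((F,ω),(F',ω')) ≤ ‖Fω - F'ω'‖`. -/
theorem stmt13 {n m M : ℕ} (hn : 0 < n) (hm : 0 < m) (hM : 0 < M)
    (𝔄 : Finset ℝ) (ak δ : ℝ) (hA : MABS.AlphOK 𝔄 ak) (hδ : 0 < δ)
    (F F' : Fin n → Fin m → ℝ) (hF : MABS.Separable 𝔄 F) (hF' : MABS.Separable 𝔄 F')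
    (ω ω' : Fin m → Fin M → ℝ) (hΩ : MABS.Omega ω) (hΩ' : MABS.Omega ω')
    (hasb : δ ≤ MABS.ASB 𝔄 ω) (hasb' : δ ≤ MABS.ASB 𝔄 ω')
    (hwsb : MABS.WSBge ak δ ω) (hwsb' : MABS.WSBge ak δ ω')
    (hsmall : MABS.frob F F' ω ω' ≤ δ * Real.sqrt (M : ℝ) / (1 + (m : ℝ) * ak)) :
    MABS.dmet F F' ω ω' ≤ MABS.frob F F' ω ω' := by
  exact MABS.stmt13' hn hm hM 𝔄 ak δ hA hδ F F' hF hF' ω ω' hΩ hΩ' hasb hasb' hwsb hwsb' hsmall
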